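/- Let G be a finite group with exactly three involutions that are pairwise conjugate in G (a 'pertinent' group), let K be the subgroup generated by the three involutions and C = C_G(K) its centralizer. Then C is normal in G and the quotient G/C is isomorphic either to the symmetric group S₃ or to the cyclic group of order 3. -/
import Mathlib

section Aux

variable {G : Type*} [Group G]

/-- `permCongr` as a `MulEquiv`. -/
def permCongrMulEquiv {α β : Type*} (e : α ≃ β) : Equiv.Perm α ≃* Equiv.Perm β :=
  { Equiv.permCongr e with
    map_mul' := fun p q => by
      ext x
      simp [Equiv.permCongr_def] }

/-- Conjugation action of `G` on its set of involutions, as a hom to permutations. -/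
def conjInvHom (G : Type*) [Group G] : G →* Equiv.Perm {x : G // orderOf x = 2} where
  toFun g :=
    { toFun := fun x => ⟨g * x * g⁻¹, by
        simpa using (orderOf_injective (MulAut.conj g).toMonoidHom
          (MulAut.conj g).injective x).trans x.2⟩
      invFun := fun x => ⟨g⁻¹ * x * g, by
        simpa using (orderOf_injective (MulAut.conj g⁻¹).toMonoidHom
          (MulAut.conj g⁻¹).injective x).trans x.2⟩
      left_inv := fun x => by ext; simp [mul_assoc]
      right_inv := fun x => by ext; simp [mul_assoc] }
  map_one' := by ext x; simp
  map_mul' a b := by ext x; simp [mul_assoc]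

lemma cent_closure_eq (S : Set G) :
    Subgroup.centralizer ((Subgroup.closure S : Subgroup G) : Set G) =
      Subgroup.centralizer S := by
  apply le_antisymm
  · exact Subgroup.centralizer_le Subgroup.subset_closure
  · intro g hg
    rw [Subgroup.mem_centralizer_iff] at hg ⊢
    intro h hh
    induction hh using Subgroup.closure_induction with
    | mem x hx => exact hg x hx
    | one => simp
    | mul x y _ _ hx hy => exact Commute.mul_left hx hy
    | inv x _ hx => exact Commute.inv_left hx

lemma ker_conjInvHom (G : Type*) [Group G] :
    (conjInvHom G).ker =
      Subgroup.centralizer ((Subgroup.closure {g : G | orderOf g = 2} : Subgroup G) : Set G) := by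
  rw [cent_closure_eq]
  ext g
  rw [MonoidHom.mem_ker, Subgroup.mem_centralizer_iff, Equiv.Perm.ext_iff]
  constructor
  · intro h x hx
    have h2 : g * x * g⁻¹ = x := congrArg Subtype.val (h ⟨x, hx⟩)
    exact (mul_inv_eq_iff_eq_mul.mp h2).symm
  · intro h x
    ext
    show g * (x : G) * g⁻¹ = (x : G)
    rw [mul_inv_eq_iff_eq_mul]
    exact (h x x.2).symm

end Aux

/-- A finite group is *pertinent* if it has exactly three involutions and
they are pairwise conjugate. -/
def Pertinent (G : Type*) [Group G] : Prop :=
  Finite G ∧ {g : G | orderOf g = 2}.ncard = 3 ∧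
    ∀ a b : G, orderOf a = 2 → orderOf b = 2 → IsConj a b

theorem stmt_0 (G : Type*) [Group G] (hG : Pertinent G) :
    ∃ hn : (Subgroup.centralizer
        ((Subgroup.closure {g : G | orderOf g = 2} : Subgroup G) : Set G)).Normal,
      letI := hn
      Nonempty ((G ⧸ Subgroup.centralizer
          ((Subgroup.closure {g : G | orderOf g = 2} : Subgroup G) : Set G))
        ≃* Equiv.Perm (Fin 3)) ∨
      Nonempty ((G ⧸ Subgroup.centralizer
          ((Subgroup.closure {g : G | orderOf g = 2} : Subgroup G) : Set G))
        ≃* Multiplicative (ZMod 3)) := by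
  obtain ⟨hfin, hcard, hconj⟩ := hG
  haveI : Finite G := hfin
  set f := conjInvHom G with hf
  have hker := ker_conjInvHom G
  haveI hn : (Subgroup.centralizer
      ((Subgroup.closure {g : G | orderOf g = 2} : Subgroup G) : Set G)).Normal :=
    hker ▸ f.normal_ker
  refine ⟨hn, ?_⟩
  -- cardinality of the subtype of involutions
  have hT : Nat.card {x : G // orderOf x = 2} = 3 := by
    rw [← Nat.card_coe_set_eq] at hcard
    exact hcard
  haveI : Finite {x : G // orderOf x = 2} := Subtype.finite
  obtain ⟨e⟩ : Nonempty ({x : G // orderOf x = 2} ≃ Fin 3) :=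
    ⟨Finite.equivFinOfCardEq hT⟩
  have hPerm : Nat.card (Equiv.Perm {x : G // orderOf x = 2}) = 6 := by
    rw [Nat.card_eq_of_bijective _ (permCongrMulEquiv e).bijective]
    rw [Nat.card_eq_fintype_card]
    norm_num [Fintype.card_perm, Nat.factorial]
  -- the quotient is isomorphic to the range
  have q : (G ⧸ Subgroup.centralizer
      ((Subgroup.closure {g : G | orderOf g = 2} : Subgroup G) : Set G)) ≃* f.range :=
    (QuotientGroup.quotientMulEquivOfEq hker.symm).trans (QuotientGroup.quotientKerEquivRange f)
  -- the range has cardinality at least 3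
  obtain ⟨a⟩ : Nonempty {x : G // orderOf x = 2} := by
    have : 0 < Nat.card {x : G // orderOf x = 2} := by omega
    exact (Nat.card_pos_iff.mp this).1
  have hsurj : Function.Surjective (fun h : f.range => (h : Equiv.Perm _) a) := by
    intro b
    obtain ⟨c, hc⟩ := isConj_iff.mp (hconj a.1 b.1 a.2 b.2)
    refine ⟨⟨f c, ⟨c, rfl⟩⟩, ?_⟩
    exact Subtype.ext hc
  have h3 : 3 ≤ Nat.card f.range := by
    have := Nat.card_le_card_of_surjective _ hsurj
    omega
  have hdvd : Nat.card f.range ∣ 6 := by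
    rw [← hPerm]
    exact Subgroup.card_subgroup_dvd_card f.range
  have h36 : Nat.card f.range = 3 ∨ Nat.card f.range = 6 := by
    have h6' : Nat.card f.range ≤ 6 := Nat.le_of_dvd (by norm_num) hdvd
    interval_cases h : Nat.card f.range
    · left; rfl
    · exfalso; revert hdvd; decide
    · exfalso; revert hdvd; decide
    · right; rfl
  rcases h36 with h3' | h6
  · right
    haveI : Fact (Nat.Prime 3) := ⟨by norm_num⟩
    have hz : Nat.card (Multiplicative (ZMod 3)) = 3 := by
      simp [Nat.card_eq_fintype_card]
    exact ⟨q.trans (mulEquivOfPrimeCardEq h3' hz)⟩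
  · left
    have htop : f.range = ⊤ := Subgroup.eq_top_of_card_eq _ (by rw [h6, hPerm])
    exact ⟨q.trans (((MulEquiv.subgroupCongr htop).trans Subgroup.topEquiv).trans
      (permCongrMulEquiv e))⟩
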